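/- The map h(α,β,γ,δ) = (β, β/α, 1/(αγ), (α+1)/(α²δ)) on ℝ₊⁴ is globally 6-periodic: its sixth iterate is the identity on ℝ₊⁴. -/
import Mathlib


/-- h(α,β,γ,δ) = (β, β/α, 1/(αγ), (α+1)/(α²δ)). -/
noncomputable def hMap : ℝ × ℝ × ℝ × ℝ → ℝ × ℝ × ℝ × ℝ :=
  fun x =>
    match x with
    | (a, b, c, d) => (b, b / a, 1 / (a * c), (a + 1) / (a ^ 2 * d))

theorem hMap_six_periodic :
    ∀ x : ℝ × ℝ × ℝ × ℝ,
      0 < x.1 → 0 < x.2.1 → 0 < x.2.2.1 → 0 < x.2.2.2 →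
      hMap^[6] x = x := by
  rintro ⟨a, b, c, d⟩ ha hb hc hd
  simp only [Function.iterate_succ, Function.iterate_zero, Function.comp_apply, id_eq, hMap]
  have ha' := ha.ne'
  have hb' := hb.ne'
  have hc' := hc.ne'
  have hd' := hd.ne'
  refine Prod.ext ?_ (Prod.ext ?_ (Prod.ext ?_ ?_)) <;> field_simp <;> ring
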